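/- Given a ranked tree shape with n leaves and k cherries, there are exactly 2^(n-1-k) ranked oriented trees mapped to it by the forgetful map that forgets the left/right orientation of children. -/

import Mathlib

/-- A rooted binary tree with ordered (left/right) children. -/
inductive OTree : Type
  | leaf : OTree
  | node : OTree → OTree → OTree
deriving DecidableEq

/-- Number of leaves. -/
def OTree.nLeaves : OTree → ℕ
  | .leaf => 1
  | .node l r => l.nLeaves + r.nLeaves

/-- Number of internal nodes. -/
def OTree.nInt : OTree → ℕ
  | .leaf => 0
  | .node l r => l.nInt + r.nInt + 1

/-- `t.isInt p` : the path `p` (`true` = left) leads to an internal node of `t`. -/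
def OTree.isInt : OTree → List Bool → Prop
  | .leaf, _ => False
  | .node _ _, [] => True
  | .node l _, true :: p => l.isInt p
  | .node _ r, false :: p => r.isInt p

/-- `t.isLf p` : the path `p` leads to a leaf of `t`. -/
def OTree.isLf : OTree → List Bool → Prop
  | .leaf, [] => True
  | .leaf, _ :: _ => False
  | .node _ _, [] => False
  | .node l _, true :: p => l.isLf p
  | .node _ r, false :: p => r.isLf p

/-- A ranking of the internal nodes of `t`: a bijection to `{1,…,n-1}` (here `Fin t.nInt`)
which strictly increases along every root-to-leaf path. -/
structure Ranking (t : OTree) where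
  rk : {p : List Bool // t.isInt p} → Fin t.nInt
  bij : Function.Bijective rk
  mono : ∀ p q : {p : List Bool // t.isInt p}, p.1 <+: q.1 → p.1 ≠ q.1 → rk p < rk q

/-- A ranked oriented tree. -/
def RankedOTree := Σ t : OTree, Ranking t

/-- Reorient a tree by swapping the two children at every position `p` with `σ p = true`. -/
def OTree.reorient (σ : List Bool → Bool) : OTree → OTree
  | .leaf => .leaf
  | .node l r =>
    let l' := l.reorient (fun p => σ (true :: p))
    let r' := r.reorient (fun p => σ (false :: p))
    if σ [] then .node r' l' else .node l' r'

/-- The induced map on paths: position `p` of `t` corresponds to `pmap σ p` of `t.reorient σ`. -/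
def pmap (σ : List Bool → Bool) : List Bool → List Bool
  | [] => []
  | b :: p => (xor b (σ [])) :: pmap (fun q => σ (b :: q)) p

/-- Two ranked oriented trees have the same ranked tree shape: some reorientation sends one to
the other, matching ranks. -/
def ShapeRel (x y : RankedOTree) : Prop :=
  ∃ σ : List Bool → Bool, y.1 = x.1.reorient σ ∧
    ∀ (p : {p : List Bool // x.1.isInt p}) (h : y.1.isInt (pmap σ p.1)),
      (y.2.rk ⟨pmap σ p.1, h⟩ : ℕ) = (x.2.rk p : ℕ)

/-- Number of cherries (internal nodes whose two children are both leaves). -/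
def OTree.nCherries : OTree → ℕ
  | .leaf => 0
  | .node .leaf .leaf => 1
  | .node l r => l.nCherries + r.nCherries

-- pmap basics
def pInv (σ : List Bool → Bool) : List Bool → List Bool
  | [] => []
  | b :: p => (xor b (σ [])) :: pInv (fun q => σ ((xor b (σ [])) :: q)) p

theorem pInv_pmap (σ : List Bool → Bool) (p : List Bool) : pInv σ (pmap σ p) = p := by
  induction p generalizing σ with
  | nil => rfl
  | cons b p ih =>
    simp only [pmap, pInv, Bool.xor_assoc, Bool.xor_self, Bool.xor_false]
    exact congrArg (b :: ·) (ih _)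

theorem pmap_pInv (σ : List Bool → Bool) (p : List Bool) : pmap σ (pInv σ p) = p := by
  induction p generalizing σ with
  | nil => rfl
  | cons b p ih =>
    simp only [pmap, pInv, Bool.xor_assoc, Bool.xor_self, Bool.xor_false]
    exact congrArg (_ :: ·) (ih _)

theorem pmap_inj (σ : List Bool → Bool) : Function.Injective (pmap σ) :=
  Function.LeftInverse.injective (pInv_pmap σ)

theorem pmap_append (σ : List Bool → Bool) (p q : List Bool) :
    pmap σ (p ++ q) = pmap σ p ++ pmap (fun s => σ (p ++ s)) q := by
  induction p generalizing σ with
  | nil => rfl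
  | cons b p ih => simp only [List.cons_append, pmap, List.append_eq, ih]

theorem pmap_concat (σ : List Bool → Bool) (p : List Bool) (b : Bool) :
    pmap σ (p ++ [b]) = pmap σ p ++ [xor b (σ p)] := by
  rw [pmap_append]; simp [pmap]

theorem pmap_length (σ : List Bool → Bool) (p : List Bool) : (pmap σ p).length = p.length := by
  induction p generalizing σ with
  | nil => rfl
  | cons b p ih => simp [pmap, ih]

theorem pmap_congr (σ σ' : List Bool → Bool) (p : List Bool)
    (h : ∀ q, q <+: p → q ≠ p → σ q = σ' q) : pmap σ p = pmap σ' p := by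
  induction p generalizing σ σ' with
  | nil => rfl
  | cons b p ih =>
    simp only [pmap]
    rw [h [] ⟨b :: p, rfl⟩ (by simp), ih _ _ (fun q hq hne => h (b :: q) (by
      obtain ⟨r, hr⟩ := hq; exact ⟨r, by simp [hr]⟩) (by simpa using hne))]

-- subAt and paths
def subAt : OTree → List Bool → Option OTree
  | t, [] => some t
  | .leaf, _ :: _ => none
  | .node l _, true :: p => subAt l p
  | .node _ r, false :: p => subAt r p

theorem isInt_iff_subAt (t : OTree) (p : List Bool) :
    t.isInt p ↔ ∃ l r, subAt t p = some (.node l r) := by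
  induction t generalizing p with
  | leaf => cases p <;> simp [OTree.isInt, subAt]
  | node l r ihl ihr =>
    match p with
    | [] => simp [OTree.isInt, subAt]
    | true :: p => simpa [OTree.isInt, subAt] using ihl p
    | false :: p => simpa [OTree.isInt, subAt] using ihr p

theorem subAt_append (t : OTree) (p q : List Bool) :
    subAt t (p ++ q) = (subAt t p).bind (fun u => subAt u q) := by
  induction t generalizing p with
  | leaf => cases p with
    | nil => rfl
    | cons b p => simp [subAt]
  | node l r ihl ihr =>
    match p with
    | [] => rfl
    | true :: p => simpa [subAt] using ihl p
    | false :: p => simpa [subAt] using ihr p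

theorem isInt_prefix (t : OTree) {p q : List Bool} (hq : t.isInt q) (hpq : p <+: q) :
    t.isInt p := by
  obtain ⟨r, rfl⟩ := hpq
  rw [isInt_iff_subAt] at hq ⊢
  obtain ⟨a, b, hab⟩ := hq
  rw [subAt_append] at hab
  cases h : subAt t p with
  | none => rw [h] at hab; simp at hab
  | some u =>
    rw [h] at hab; simp at hab
    cases u with
    | leaf =>
      cases r with
      | nil => simp [subAt] at hab
      | cons c cs => simp [subAt] at hab
    | node u v => exact ⟨u, v, rfl⟩

/-- `p` is a non-cherry position: some child is internal. -/
def NC (t : OTree) (p : List Bool) : Prop := t.isInt (p ++ [true]) ∨ t.isInt (p ++ [false])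

theorem not_nc_iff {t : OTree} {p : List Bool} (h : t.isInt p) :
    ¬ NC t p ↔ subAt t p = some (.node .leaf .leaf) := by
  rw [isInt_iff_subAt] at h
  obtain ⟨a, b, hab⟩ := h
  have h1 : ∀ c : Bool, subAt t (p ++ [c]) = subAt (OTree.node a b) [c] := by
    intro c; rw [subAt_append, hab]; rfl
  unfold NC
  rw [isInt_iff_subAt, isInt_iff_subAt, h1, h1, hab]
  cases a <;> cases b <;> simp [subAt]

/-- list of internal positions -/
def OTree.paths : OTree → List (List Bool)
  | .leaf => []
  | .node l r => [] :: (l.paths.map (true :: ·) ++ r.paths.map (false :: ·))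

theorem mem_paths (t : OTree) (p : List Bool) : p ∈ t.paths ↔ t.isInt p := by
  induction t generalizing p with
  | leaf => simp [OTree.paths, OTree.isInt]
  | node l r ihl ihr =>
    match p with
    | [] => simp [OTree.paths, OTree.isInt]
    | true :: p => simp [OTree.paths, OTree.isInt, ← ihl p]
    | false :: p => simp [OTree.paths, OTree.isInt, ← ihr p]

theorem paths_nodup (t : OTree) : t.paths.Nodup := by
  induction t with
  | leaf => simp [OTree.paths]
  | node l r ihl ihr =>
    simp only [OTree.paths, List.nodup_cons, List.mem_append]
    constructor
    · simp
    · refine List.Nodup.append ((List.nodup_map_iff (by intro a b; simp)).2 ihl)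
        ((List.nodup_map_iff (by intro a b; simp)).2 ihr) ?_
      simp [List.disjoint_left]

theorem paths_length (t : OTree) : t.paths.length = t.nInt := by
  induction t with
  | leaf => rfl
  | node l r ihl ihr => simp [OTree.paths, OTree.nInt, ihl, ihr]

theorem nCherries_node (l r : OTree) (h : ¬(l = .leaf ∧ r = .leaf)) :
    (OTree.node l r).nCherries = l.nCherries + r.nCherries := by
  cases l <;> cases r <;> simp_all [OTree.nCherries]

theorem cherry_filter_length (t : OTree) :
    (t.paths.filter (fun p => subAt t p = some (.node .leaf .leaf))).length = t.nCherries := by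
  induction t with
  | leaf => rfl
  | node l r ihl ihr =>
    by_cases hlr : l = .leaf ∧ r = .leaf
    · obtain ⟨rfl, rfl⟩ := hlr
      simp [OTree.paths, OTree.nCherries, subAt]
    · rw [nCherries_node l r hlr]
      have hroot : (decide (subAt (OTree.node l r) [] = some (.node .leaf .leaf))) = false := by
        simp [subAt]; rintro rfl rfl; exact hlr ⟨rfl, rfl⟩
      simp only [OTree.paths, List.filter_cons, hroot, if_false, List.filter_append,
        List.length_append, List.filter_map, List.length_map]
      have e1 : ((fun p => decide (subAt (OTree.node l r) p = some (.node .leaf .leaf))) ∘ (true :: ·))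
          = (fun p => decide (subAt l p = some (.node .leaf .leaf))) := rfl
      have e2 : ((fun p => decide (subAt (OTree.node l r) p = some (.node .leaf .leaf))) ∘ (false :: ·))
          = (fun p => decide (subAt r p = some (.node .leaf .leaf))) := rfl
      rw [e1, e2]; simp [ihl, ihr]

theorem nodup_card (l : List (List Bool)) (hl : l.Nodup) : Nat.card {x // x ∈ l} = l.length := by
  have e : {x // x ∈ l} ≃ {x // x ∈ l.toFinset} := Equiv.subtypeEquivRight (by simp)
  rw [Nat.card_congr e, Nat.card_eq_fintype_card, Fintype.card_coe,
    List.toFinset_card_of_nodup hl]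

theorem card_int (t : OTree) : Nat.card {p // t.isInt p} = t.nInt := by
  have e : {p // t.isInt p} ≃ {p // p ∈ t.paths} := Equiv.subtypeEquivRight (by simp [mem_paths])
  rw [Nat.card_congr e, nodup_card _ (paths_nodup t), paths_length]

theorem card_cherry (t : OTree) : Nat.card {p // t.isInt p ∧ ¬ NC t p} = t.nCherries := by
  have e : {p // t.isInt p ∧ ¬ NC t p} ≃
      {p // p ∈ t.paths.filter (fun p => subAt t p = some (.node .leaf .leaf))} := by
    refine Equiv.subtypeEquivRight (fun p => ?_)
    rw [List.mem_filter, mem_paths]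
    constructor
    · rintro ⟨h1, h2⟩; exact ⟨h1, by simpa using (not_nc_iff h1).1 h2⟩
    · rintro ⟨h1, h2⟩; exact ⟨h1, (not_nc_iff h1).2 (by simpa using h2)⟩
  rw [Nat.card_congr e, nodup_card _ ((paths_nodup t).filter _), cherry_filter_length]

instance finite_int (t : OTree) : Finite {p // t.isInt p} := by
  have e : {p // t.isInt p} ≃ {p // p ∈ t.paths} := Equiv.subtypeEquivRight (by simp [mem_paths])
  have : Finite {p // p ∈ t.paths} := by
    have e2 : {p // p ∈ t.paths} ≃ {p // p ∈ t.paths.toFinset} :=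
      Equiv.subtypeEquivRight (by simp)
    exact Finite.of_equiv _ e2.symm
  exact Finite.of_equiv _ e.symm

theorem card_nc (t : OTree) : Nat.card {p // t.isInt p ∧ NC t p} = t.nInt - t.nCherries := by
  classical
  have h1 : Finite {p // t.isInt p ∧ NC t p} :=
    Finite.of_injective (fun q => (⟨q.1, q.2.1⟩ : {p // t.isInt p}))
      (fun a b h => Subtype.ext (by simpa using congrArg Subtype.val h))
  have h2 : Finite {p // t.isInt p ∧ ¬ NC t p} :=
    Finite.of_injective (fun q => (⟨q.1, q.2.1⟩ : {p // t.isInt p}))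
      (fun a b h => Subtype.ext (by simpa using congrArg Subtype.val h))
  have key : Nat.card {p // t.isInt p ∧ NC t p} + Nat.card {p // t.isInt p ∧ ¬ NC t p}
      = Nat.card {p // t.isInt p} := by
    rw [← Nat.card_sum]
    refine Nat.card_congr ?_
    refine Equiv.trans (Equiv.sumCongr
      (Equiv.subtypeSubtypeEquivSubtypeInter (t.isInt) (NC t)).symm
      (Equiv.subtypeSubtypeEquivSubtypeInter (t.isInt) (fun p => ¬ NC t p)).symm) ?_
    exact Equiv.sumCompl (fun q : {p // t.isInt p} => NC t q.1)
  rw [card_int, card_cherry] at key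
  omega

theorem reorient_false (t : OTree) : t.reorient (fun _ => false) = t := by
  induction t with
  | leaf => rfl
  | node l r ihl ihr => simp [OTree.reorient, ihl, ihr]

theorem pmap_false (p : List Bool) : pmap (fun _ => false) p = p := by
  induction p with
  | nil => rfl
  | cons b p ih => simp [pmap, ih]

theorem nInt_reorient (σ : List Bool → Bool) (t : OTree) :
    (t.reorient σ).nInt = t.nInt := by
  induction t generalizing σ with
  | leaf => rfl
  | node l r ihl ihr =>
    simp only [OTree.reorient]
    cases hσ : σ [] <;> simp [OTree.nInt, ihl, ihr] <;> omega

theorem isInt_reorient (σ : List Bool → Bool) (t : OTree) (p : List Bool) :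
    (t.reorient σ).isInt (pmap σ p) ↔ t.isInt p := by
  induction t generalizing σ p with
  | leaf => simp [OTree.reorient, OTree.isInt]
  | node l r ihl ihr =>
    match p with
    | [] => cases hσ : σ [] <;> simp [OTree.reorient, pmap, hσ, OTree.isInt]
    | b :: p =>
      cases b <;> cases hσ : σ [] <;>
        simp [OTree.reorient, pmap, hσ, OTree.isInt, ihl, ihr]

theorem isInt_reorient_inv (σ : List Bool → Bool) (t : OTree) (q : List Bool) :
    (t.reorient σ).isInt q ↔ t.isInt (pInv σ q) := by
  conv_lhs => rw [← pmap_pInv σ q]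
  exact isInt_reorient σ t (pInv σ q)

theorem pmap_comp (σ τ : List Bool → Bool) (p : List Bool) :
    pmap τ (pmap σ p) = pmap (fun q => xor (σ q) (τ (pmap σ q))) p := by
  induction p generalizing σ τ with
  | nil => rfl
  | cons b p ih =>
    simp only [pmap, ih, Bool.xor_assoc]

theorem reorient_comp (t : OTree) (σ τ : List Bool → Bool) :
    (t.reorient σ).reorient τ = t.reorient (fun p => xor (σ p) (τ (pmap σ p))) := by
  induction t generalizing σ τ with
  | leaf => rfl
  | node l r ihl ihr =>
    simp only [OTree.reorient]
    cases hσ : σ [] <;> cases hτ : τ [] <;>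
      simp [OTree.reorient, hσ, hτ, ihl, ihr, pmap]

theorem reorient_congr : ∀ {t : OTree} {σ σ' : List Bool → Bool},
    (∀ p, t.isInt p → NC t p → σ p = σ' p) → t.reorient σ = t.reorient σ' := by
  intro t
  induction t with
  | leaf => intro _ _ _; rfl
  | node l r ihl ihr =>
    intro σ σ' h
    by_cases hlr : l = .leaf ∧ r = .leaf
    · obtain ⟨rfl, rfl⟩ := hlr
      simp [OTree.reorient]
    · have hnc : NC (OTree.node l r) [] := by
        unfold NC
        rcases l with _ | ⟨a, b⟩
        · rcases r with _ | ⟨a, b⟩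
          · exact absurd ⟨rfl, rfl⟩ hlr
          · right; simp [OTree.isInt]
        · left; simp [OTree.isInt]
      have h0 : σ [] = σ' [] := h [] trivial hnc
      have e1 := ihl (σ := fun p => σ (true :: p)) (σ' := fun p => σ' (true :: p))
        (fun p hp hq => h (true :: p) hp hq)
      have e2 := ihr (σ := fun p => σ (false :: p)) (σ' := fun p => σ' (false :: p))
        (fun p hp hq => h (false :: p) hp hq)
      simp only [OTree.reorient, h0, e1, e2]


theorem pmap_prefix (σ : List Bool → Bool) {p q : List Bool} (h : p <+: q) :
    pmap σ p <+: pmap σ q := by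
  obtain ⟨r, rfl⟩ := h
  rw [pmap_append]
  exact ⟨_, rfl⟩

theorem pmap_pmap_inv (σ : List Bool → Bool) (p : List Bool) :
    pmap (fun q => σ (pInv σ q)) (pmap σ p) = p := by
  rw [pmap_comp]
  have : (fun s => xor (σ s) ((fun q => σ (pInv σ q)) (pmap σ s))) = fun _ => false := by
    funext s; simp [pInv_pmap]
  rw [this, pmap_false]

theorem pInv_eq_pmap (σ : List Bool → Bool) :
    pInv σ = pmap (fun q => σ (pInv σ q)) := by
  funext q
  have h := pmap_pmap_inv σ (pInv σ q)
  rw [pmap_pInv] at h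
  exact h.symm

theorem proper_prefix_int_nc {t : OTree} {p q : List Bool} (hp : t.isInt p)
    (hpre : q <+: p) (hne : q ≠ p) : t.isInt q ∧ NC t q := by
  refine ⟨isInt_prefix t hp hpre, ?_⟩
  obtain ⟨r, rfl⟩ := hpre
  match r with
  | [] => exact absurd (by simp) hne
  | true :: cs => exact Or.inl (isInt_prefix t hp ⟨cs, by simp⟩)
  | false :: cs => exact Or.inr (isInt_prefix t hp ⟨cs, by simp⟩)

theorem pmap_congr_int {t : OTree} (σ σ' : List Bool → Bool)
    (h : ∀ q, t.isInt q → NC t q → σ q = σ' q) {p : List Bool} (hp : t.isInt p) :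
    pmap σ p = pmap σ' p := by
  refine pmap_congr σ σ' p (fun q hq hne => ?_)
  obtain ⟨h1, h2⟩ := proper_prefix_int_nc hp hq hne
  exact h q h1 h2

/-- The path equivalence induced by a reorientation. -/
def pathEquiv (σ : List Bool → Bool) (t : OTree) :
    {p // t.isInt p} ≃ {q // (t.reorient σ).isInt q} where
  toFun p := ⟨pmap σ p.1, (isInt_reorient σ t p.1).2 p.2⟩
  invFun q := ⟨pInv σ q.1, (isInt_reorient_inv σ t q.1).1 q.2⟩
  left_inv p := Subtype.ext (pInv_pmap σ p.1)
  right_inv q := Subtype.ext (pmap_pInv σ q.1)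

/-- Transport a ranking along a reorientation. -/
def Ranking.transport {t : OTree} (R : Ranking t) (σ : List Bool → Bool) :
    Ranking (t.reorient σ) where
  rk q := Fin.cast (nInt_reorient σ t).symm (R.rk ((pathEquiv σ t).symm q))
  bij := by
    have : (fun q => Fin.cast (nInt_reorient σ t).symm (R.rk ((pathEquiv σ t).symm q)))
        = (finCongr (nInt_reorient σ t).symm) ∘ R.rk ∘ (pathEquiv σ t).symm := rfl
    rw [this]
    exact ((finCongr _).bijective.comp R.bij).comp (pathEquiv σ t).symm.bijective
  mono p q hpre hne := by
    have h1 : pInv σ p.1 <+: pInv σ q.1 := by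
      rw [pInv_eq_pmap]; exact pmap_prefix _ hpre
    have h2 : pInv σ p.1 ≠ pInv σ q.1 := by
      intro h
      exact hne (by rw [← pmap_pInv σ p.1, ← pmap_pInv σ q.1, h])
    have h3 := R.mono ((pathEquiv σ t).symm p) ((pathEquiv σ t).symm q) h1 h2
    rw [Fin.lt_def] at h3 ⊢
    rw [Fin.coe_cast, Fin.coe_cast]
    exact h3

/-- The action of a reorientation on ranked oriented trees. -/
def act (x : RankedOTree) (σ : List Bool → Bool) : RankedOTree :=
  ⟨x.1.reorient σ, x.2.transport σ⟩

def Witness (x y : RankedOTree) (σ : List Bool → Bool) : Prop :=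
  y.1 = x.1.reorient σ ∧
    ∀ (p : {p : List Bool // x.1.isInt p}) (h : y.1.isInt (pmap σ p.1)),
      (y.2.rk ⟨pmap σ p.1, h⟩ : ℕ) = (x.2.rk p : ℕ)

theorem shapeRel_iff_witness (x y : RankedOTree) : ShapeRel x y ↔ ∃ σ, Witness x y σ :=
  Iff.rfl

theorem act_witness (x : RankedOTree) (σ : List Bool → Bool) : Witness x (act x σ) σ := by
  refine ⟨rfl, fun p h => ?_⟩
  have he : ((pathEquiv σ x.1).symm ⟨pmap σ p.1, h⟩) = p :=
    (pathEquiv σ x.1).symm_apply_eq.2 (Subtype.ext rfl)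
  show (Fin.cast (nInt_reorient σ x.1).symm
      (x.2.rk ((pathEquiv σ x.1).symm ⟨pmap σ p.1, h⟩)) : ℕ) = _
  rw [he, Fin.coe_cast]

theorem shapeRel_act (x : RankedOTree) (σ : List Bool → Bool) : ShapeRel x (act x σ) :=
  ⟨σ, act_witness x σ⟩

theorem shapeRel_refl (x : RankedOTree) : ShapeRel x x := by
  refine ⟨fun _ => false, (reorient_false x.1).symm, fun p h => ?_⟩
  have h' : (⟨pmap (fun _ => false) p.1, h⟩ : {q // x.1.isInt q}) = p :=
    Subtype.ext (pmap_false p.1)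
  rw [h']

theorem witness_symm {x y : RankedOTree} {σ : List Bool → Bool} (w : Witness x y σ) :
    Witness y x (fun q => σ (pInv σ q)) := by
  obtain ⟨hy, hr⟩ := w
  constructor
  · rw [hy, reorient_comp]
    have : (fun p => xor (σ p) ((fun q => σ (pInv σ q)) (pmap σ p))) = fun _ => false := by
      funext s; simp [pInv_pmap]
    rw [this, reorient_false]
  · rintro ⟨q, hq⟩ h
    have hq' : x.1.isInt (pInv σ q) := by
      rw [hy] at hq; exact (isInt_reorient_inv σ x.1 q).1 hq
    have e1 : pmap (fun q => σ (pInv σ q)) q = pInv σ q := by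
      conv_lhs => rw [← pmap_pInv σ q]
      rw [pmap_pmap_inv]
    have e2 : pmap σ (pInv σ q) = q := pmap_pInv σ q
    have h2 : y.1.isInt (pmap σ (pInv σ q)) := by rw [e2]; exact hq
    have := hr ⟨pInv σ q, hq'⟩ h2
    calc (x.2.rk ⟨pmap (fun q => σ (pInv σ q)) q, h⟩ : ℕ)
        = (x.2.rk ⟨pInv σ q, hq'⟩ : ℕ) := by
          have h' : (⟨pmap (fun q => σ (pInv σ q)) q, h⟩ : {p // x.1.isInt p})
              = ⟨pInv σ q, hq'⟩ := Subtype.ext e1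
          rw [h']
      _ = (y.2.rk ⟨pmap σ (pInv σ q), h2⟩ : ℕ) := this.symm
      _ = (y.2.rk ⟨q, hq⟩ : ℕ) := by
          have h' : (⟨pmap σ (pInv σ q), h2⟩ : {p // y.1.isInt p}) = ⟨q, hq⟩ :=
            Subtype.ext e2
          rw [h']

theorem witness_trans {x y z : RankedOTree} {σ τ : List Bool → Bool}
    (w1 : Witness x y σ) (w2 : Witness y z τ) :
    Witness x z (fun p => xor (σ p) (τ (pmap σ p))) := by
  obtain ⟨hy, hr1⟩ := w1
  obtain ⟨hz, hr2⟩ := w2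
  constructor
  · rw [hz, hy, reorient_comp]
  · rintro ⟨p, hp⟩ h
    have e : pmap (fun p => xor (σ p) (τ (pmap σ p))) p = pmap τ (pmap σ p) :=
      (pmap_comp σ τ p).symm
    have hq : y.1.isInt (pmap σ p) := by
      rw [hy]; exact (isInt_reorient σ x.1 p).2 hp
    have h2 : z.1.isInt (pmap τ (pmap σ p)) := by rw [← e]; exact h
    calc (z.2.rk ⟨pmap (fun p => xor (σ p) (τ (pmap σ p))) p, h⟩ : ℕ)
        = (z.2.rk ⟨pmap τ (pmap σ p), h2⟩ : ℕ) := by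
          have h' : (⟨pmap (fun p => xor (σ p) (τ (pmap σ p))) p, h⟩ : {p // z.1.isInt p})
              = ⟨pmap τ (pmap σ p), h2⟩ := Subtype.ext e
          rw [h']
      _ = (y.2.rk ⟨pmap σ p, hq⟩ : ℕ) := hr2 ⟨pmap σ p, hq⟩ h2
      _ = (x.2.rk ⟨p, hp⟩ : ℕ) := hr1 ⟨p, hp⟩ hq

theorem shapeRel_equivalence : Equivalence ShapeRel where
  refl := shapeRel_refl
  symm := by rintro x y ⟨σ, w⟩; exact ⟨_, witness_symm w⟩
  trans := by rintro x y z ⟨σ, w1⟩ ⟨τ, w2⟩; exact ⟨_, witness_trans w1 w2⟩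

theorem ranking_ext {t : OTree} (R R' : Ranking t)
    (h : ∀ p, (R.rk p : ℕ) = (R'.rk p : ℕ)) : R = R' := by
  obtain ⟨rk, bij, mono⟩ := R
  obtain ⟨rk', bij', mono'⟩ := R'
  have : rk = rk' := funext fun p => Fin.ext (h p)
  subst this
  rfl

theorem rankedOTree_ext (y z : RankedOTree) (h : y.1 = z.1)
    (hr : ∀ p (h1 : y.1.isInt p) (h2 : z.1.isInt p),
      (y.2.rk ⟨p, h1⟩ : ℕ) = (z.2.rk ⟨p, h2⟩ : ℕ)) : y = z := by
  obtain ⟨t, R⟩ := y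
  obtain ⟨t', R'⟩ := z
  dsimp at h
  subst h
  have : R = R' := ranking_ext R R' (fun p => hr p.1 p.2 p.2)
  rw [this]

theorem witness_pmap_eq {x y : RankedOTree} {σ σ' : List Bool → Bool}
    (w1 : Witness x y σ) (w2 : Witness x y σ')
    (p : List Bool) (hp : x.1.isInt p) : pmap σ p = pmap σ' p := by
  have h1 : y.1.isInt (pmap σ p) := by
    rw [w1.1]; exact (isInt_reorient σ x.1 p).2 hp
  have h2 : y.1.isInt (pmap σ' p) := by
    rw [w2.1]; exact (isInt_reorient σ' x.1 p).2 hp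
  have e : (y.2.rk ⟨pmap σ p, h1⟩ : ℕ) = (y.2.rk ⟨pmap σ' p, h2⟩ : ℕ) := by
    rw [w1.2 ⟨p, hp⟩ h1, w2.2 ⟨p, hp⟩ h2]
  have := y.2.bij.injective (Fin.ext e)
  exact congrArg Subtype.val this

open scoped Classical in
noncomputable def extFun (x : RankedOTree) (s : {p // x.1.isInt p ∧ NC x.1 p} → Bool) : List Bool → Bool :=
  fun p => if h : x.1.isInt p ∧ NC x.1 p then s ⟨p, h⟩ else false

theorem extFun_agree (x : RankedOTree) (s : {p // x.1.isInt p ∧ NC x.1 p} → Bool)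
    (σ : List Bool → Bool) (hs : ∀ q, s q = σ q.1) :
    ∀ p, x.1.isInt p → NC x.1 p → extFun x s p = σ p := by
  intro p h1 h2
  rw [extFun, dif_pos ⟨h1, h2⟩, hs]

noncomputable def Phi (x : RankedOTree) (s : {p // x.1.isInt p ∧ NC x.1 p} → Bool) :
    {y // ShapeRel x y} :=
  ⟨act x (extFun x s), shapeRel_act x (extFun x s)⟩

theorem Phi_inj (x : RankedOTree) : Function.Injective (Phi x) := by
  intro s s' h
  have e : act x (extFun x s) = act x (extFun x s') := congrArg Subtype.val h
  have w1 : Witness x (act x (extFun x s)) (extFun x s) := act_witness x _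
  have w2 : Witness x (act x (extFun x s)) (extFun x s') := by
    have w := act_witness x (extFun x s')
    rw [← e] at w
    exact w
  funext q
  obtain ⟨hq, hnc⟩ := q.2
  have hb : ∃ b, x.1.isInt (q.1 ++ [b]) := by
    rcases hnc with h' | h'
    exacts [⟨true, h'⟩, ⟨false, h'⟩]
  obtain ⟨b, hb⟩ := hb
  have e1 := witness_pmap_eq w1 w2 q.1 hq
  have e2 := witness_pmap_eq w1 w2 (q.1 ++ [b]) hb
  rw [pmap_concat, pmap_concat, e1] at e2
  have e3 : xor b (extFun x s q.1) = xor b (extFun x s' q.1) := by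
    have := List.append_cancel_left e2
    simpa using this
  have e4 : extFun x s q.1 = extFun x s' q.1 := by
    cases b <;> simpa using e3
  rw [extFun, extFun, dif_pos ⟨hq, hnc⟩, dif_pos ⟨hq, hnc⟩] at e4
  have : (⟨q.1, ⟨hq, hnc⟩⟩ : {p // x.1.isInt p ∧ NC x.1 p}) = q := Subtype.ext rfl
  rwa [this] at e4

theorem Phi_surj (x : RankedOTree) : Function.Surjective (Phi x) := by
  rintro ⟨y, hrel⟩
  obtain ⟨σ, hy, hr⟩ := hrel
  refine ⟨fun q => σ q.1, Subtype.ext ?_⟩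
  have hagree := extFun_agree x (fun q => σ q.1) σ (fun _ => rfl)
  have ht : (act x (extFun x fun q => σ q.1)).1 = y.1 := by
    rw [hy]; exact reorient_congr hagree
  refine rankedOTree_ext _ _ ht (fun p h1 h2 => ?_)
  have hp0 : x.1.isInt (pInv σ p) := by
    rw [hy] at h2; exact (isInt_reorient_inv σ x.1 p).1 h2
  have hpe : pmap σ (pInv σ p) = p := pmap_pInv σ p
  have hee : pmap (extFun x fun q => σ q.1) (pInv σ p) = pmap σ (pInv σ p) :=
    pmap_congr_int _ _ hagree hp0
  have h1' : (act x (extFun x fun q => σ q.1)).1.isInt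
      (pmap (extFun x fun q => σ q.1) (pInv σ p)) := by
    rw [hee, hpe]; exact h1
  have a1 := (act_witness x (extFun x fun q => σ q.1)).2 ⟨pInv σ p, hp0⟩ h1'
  have h2' : y.1.isInt (pmap σ (pInv σ p)) := by rw [hpe]; exact h2
  have a2 := hr ⟨pInv σ p, hp0⟩ h2'
  have k1 : (⟨p, h1⟩ : {q // (act x (extFun x fun q => σ q.1)).1.isInt q})
      = ⟨pmap (extFun x fun q => σ q.1) (pInv σ p), h1'⟩ :=
    Subtype.ext (hee.trans hpe).symm
  have k2 : (⟨p, h2⟩ : {q // y.1.isInt q}) = ⟨pmap σ (pInv σ p), h2'⟩ :=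
    Subtype.ext hpe.symm
  exact (congrArg (fun q => ((act x (extFun x fun q => σ q.1)).2.rk q : ℕ)) k1).trans
    (a1.trans (a2.symm.trans (congrArg (fun q => (y.2.rk q : ℕ)) k2).symm))

instance finite_nc (t : OTree) : Finite {p // t.isInt p ∧ NC t p} :=
  Finite.of_injective (fun q => (⟨q.1, q.2.1⟩ : {p // t.isInt p}))
    (fun a b h => Subtype.ext (by simpa using congrArg Subtype.val h))

theorem nLeaves_eq (t : OTree) : t.nLeaves = t.nInt + 1 := by
  induction t with
  | leaf => rfl
  | node l r ihl ihr => simp [OTree.nLeaves, OTree.nInt, ihl, ihr]; omega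

/-- a ranked tree shape with n leaves and k cherries has exactly 2^(n-1-k)
ranked oriented trees mapping to it under the forgetful map; here the shape is represented
by any ranked oriented tree `x`, and the preimage of the shape is the equivalence class of `x`. -/
theorem stmt1 (x : RankedOTree) (n k : ℕ)
    (hn : x.1.nLeaves = n) (hk : x.1.nCherries = k) :
    Nat.card {y : RankedOTree // Relation.EqvGen ShapeRel x y} = 2 ^ (n - 1 - k) := by
  classical
  subst hn hk
  have e0 : {y // Relation.EqvGen ShapeRel x y} ≃ {y // ShapeRel x y} :=
    Equiv.subtypeEquivRight (fun y => shapeRel_equivalence.eqvGen_iff)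
  rw [Nat.card_congr e0,
    ← Nat.card_eq_of_bijective (Phi x) ⟨Phi_inj x, Phi_surj x⟩,
    Nat.card_fun, card_nc]
  have h1 : Nat.card Bool = 2 := by simp [Nat.card_eq_fintype_card]
  rw [h1]
  have h2 := nLeaves_eq x.1
  congr 1
  omega
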